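/- Let n ≥ 3 and let x ∈ Δ_n satisfy x_1 ≤ x_2 ≤ … ≤ x_n and x_1 + x_2 ≤ 1/2. Define y := (x_1 + x_2, x_3, …, x_n) ∈ Δ_{n−1} obtained by merging the two smallest coordinates, and write w(u) := s₂(u)² + s₂(u) − 2 s₃(u), where s_k(u) := Σ_i u_i^k. Then w(y) ≥ w(x). -/
import Mathlib


/-- merging the two smallest coordinates of a sorted point of the
probability simplex whose two smallest coordinates sum to at most `1/2` does not
decrease `w(u) = s₂(u)² + s₂(u) − 2 s₃(u)`. -/
theorem merge_two_smallest_increases_w (n : ℕ) (hn : 3 ≤ n) (x : Fin n → ℝ)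
    (hx_nonneg : ∀ i, 0 ≤ x i) (hx_sum : ∑ i, x i = 1)
    (hmono : Monotone x)
    (hsmall : x ⟨0, by omega⟩ + x ⟨1, by omega⟩ ≤ 1 / 2)
    (y : Fin (n - 1) → ℝ)
    (hy : ∀ j : Fin (n - 1), y j =
      if (j : ℕ) = 0 then x ⟨0, by omega⟩ + x ⟨1, by omega⟩
      else x ⟨(j : ℕ) + 1, by have := j.isLt; omega⟩) :
    (∑ i, x i ^ 2) ^ 2 + (∑ i, x i ^ 2) - 2 * ∑ i, x i ^ 3 ≤
      (∑ j, y j ^ 2) ^ 2 + (∑ j, y j ^ 2) - 2 * ∑ j, y j ^ 3 := by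
  obtain ⟨m, rfl⟩ : ∃ m, n = m + 3 := ⟨n - 3, by omega⟩
  set g : ℕ → ℝ := fun i => if h : i < m + 3 then x ⟨i, h⟩ else 0 with hg
  have hgval : ∀ (i : ℕ) (h : i < m + 3), g i = x ⟨i, h⟩ := fun i h => dif_pos h
  have hx_k : ∀ k : ℕ, ∑ i : Fin (m + 3), x i ^ k
      = g 0 ^ k + g 1 ^ k + ∑ j ∈ Finset.range (m + 1), g (j + 2) ^ k := by
    intro k
    have h1 : ∑ i : Fin (m + 3), x i ^ k = ∑ i ∈ Finset.range (m + 3), g i ^ k := by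
      rw [← Fin.sum_univ_eq_sum_range (fun i => g i ^ k) (m + 3)]
      refine Finset.sum_congr rfl fun i _ => ?_
      rw [hgval i i.isLt]
    rw [h1, Finset.sum_range_succ' _ (m + 2), Finset.sum_range_succ' _ (m + 1)]
    ring
  have hy_k : ∀ k : ℕ, ∑ j : Fin (m + 3 - 1), y j ^ k
      = (g 0 + g 1) ^ k + ∑ j ∈ Finset.range (m + 1), g (j + 2) ^ k := by
    intro k
    have h2 : ∀ j : Fin (m + 3 - 1), y j
        = if (j : ℕ) = 0 then g 0 + g 1 else g ((j : ℕ) + 1) := by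
      intro j
      rw [hy j]
      split
      · rw [hgval 0 (by omega), hgval 1 (by omega)]
      · rw [hgval _ (by have := j.isLt; omega)]
    have h3 : ∑ j : Fin (m + 3 - 1), y j ^ k
        = ∑ j ∈ Finset.range (m + 3 - 1), (if j = 0 then g 0 + g 1 else g (j + 1)) ^ k := by
      rw [← Fin.sum_univ_eq_sum_range
        (fun j => (if j = 0 then g 0 + g 1 else g (j + 1)) ^ k) (m + 3 - 1)]
      exact Finset.sum_congr rfl fun j _ => by rw [h2 j]
    rw [h3]
    have hmm : m + 3 - 1 = m + 1 + 1 := rfl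
    rw [hmm, Finset.sum_range_succ' _ (m + 1)]
    have h4 : ∀ j ∈ Finset.range (m + 1),
        (if j + 1 = 0 then g 0 + g 1 else g (j + 1 + 1)) ^ k = g (j + 2) ^ k := by
      intro j _
      rw [if_neg (Nat.succ_ne_zero j)]
    rw [Finset.sum_congr rfl h4]
    rw [if_pos rfl]
    ring
  have ha0 : (0:ℝ) ≤ x ⟨0, by omega⟩ := hx_nonneg _
  have hb0 : (0:ℝ) ≤ x ⟨1, by omega⟩ := hx_nonneg _
  have hab : x ⟨0, by omega⟩ ≤ x ⟨1, by omega⟩ := hmono (by simp [Fin.mk_le_mk])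
  have hg0 : g 0 = x ⟨0, by omega⟩ := hgval 0 (by omega)
  have hg1 : g 1 = x ⟨1, by omega⟩ := hgval 1 (by omega)
  have hsum1 : g 0 + g 1 + ∑ j ∈ Finset.range (m + 1), g (j + 2) = 1 := by
    have h := hx_k 1
    simp only [pow_one] at h
    linarith [hx_sum, h]
  rw [hg0, hg1] at hsum1
  have hT : ∑ j ∈ Finset.range (m + 1), g (j + 2)
      = 1 - x ⟨0, by omega⟩ - x ⟨1, by omega⟩ := by linarith [hsum1]
  have htail : (x ⟨1, by omega⟩ : ℝ) * (∑ j ∈ Finset.range (m + 1), g (j + 2))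
      ≤ ∑ j ∈ Finset.range (m + 1), g (j + 2) ^ 2 := by
    rw [Finset.mul_sum]
    refine Finset.sum_le_sum fun j hj => ?_
    have hjlt : j + 2 < m + 3 := by
      have := Finset.mem_range.mp hj; omega
    rw [hgval _ hjlt]
    have h1 : x ⟨1, by omega⟩ ≤ x ⟨j + 2, hjlt⟩ := hmono (Fin.mk_le_mk.mpr (by omega))
    have h2 : (0:ℝ) ≤ x ⟨j + 2, hjlt⟩ := hx_nonneg _
    nlinarith
  rw [hT] at htail
  have hK : (0:ℝ) ≤ 2 * (x ⟨0, by omega⟩ ^ 2 + x ⟨1, by omega⟩ ^ 2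
        + ∑ j ∈ Finset.range (m + 1), g (j + 2) ^ 2)
      + 2 * (x ⟨0, by omega⟩ * x ⟨1, by omega⟩) + 1
      - 3 * (x ⟨0, by omega⟩ + x ⟨1, by omega⟩) := by
    nlinarith [htail, hsmall, ha0, hb0, hab,
      sq_nonneg (2 * x ⟨0, by omega⟩ - 1)]
  rw [hx_k 2, hx_k 3, hy_k 2, hy_k 3, hg0, hg1]
  nlinarith [mul_nonneg (mul_nonneg ha0 hb0) hK]
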